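/- Positive definiteness of the discrete H^{-1} form on mean-zero grid functions: Let φ be a grid function and η a grid function satisfying the discrete Neumann BC with -Δ_h η = φ at all interior cells. Then (φ,φ)_{-1} := ‖∇_h η‖^2 ≥ 0, and if ‖∇_h η‖^2 = 0 then φ_{i,j} = 0 for all i = 1,...,N_x, j = 1,...,N_y. -/
import Mathlib


open Finset

/-- Discrete inner product `(f,g)_m` over interior cells `i = 1,...,Nx`, `j = 1,...,Ny`. -/
noncomputable def innerM (Nx Ny : ℕ) (hx hy : ℝ) (f g : ℕ → ℕ → ℝ) : ℝ :=
  ∑ i ∈ Finset.Icc 1 Nx, ∑ j ∈ Finset.Icc 1 Ny, hx * hy * f i j * g i j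

/-- Discrete inner product `(u,v)_x` for x-edge arrays; index `i` stands for `i + 1/2`. -/
noncomputable def innerX (Nx Ny : ℕ) (hx hy : ℝ) (u v : ℕ → ℕ → ℝ) : ℝ :=
  ∑ i ∈ Finset.Icc 1 (Nx - 1), ∑ j ∈ Finset.Icc 1 Ny, hx * hy * u i j * v i j

/-- Discrete inner product `(u,v)_y` for y-edge arrays; index `j` stands for `j + 1/2`. -/
noncomputable def innerY (Nx Ny : ℕ) (hx hy : ℝ) (u v : ℕ → ℕ → ℝ) : ℝ :=
  ∑ i ∈ Finset.Icc 1 Nx, ∑ j ∈ Finset.Icc 1 (Ny - 1), hx * hy * u i j * v i j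

/-- `[d_x g]_{i+1/2, j}`, stored at index `(i, j)`. -/
noncomputable def dX (hx : ℝ) (g : ℕ → ℕ → ℝ) : ℕ → ℕ → ℝ := fun i j => (g (i + 1) j - g i j) / hx

/-- `[d_y g]_{i, j+1/2}`, stored at index `(i, j)`. -/
noncomputable def dY (hy : ℝ) (g : ℕ → ℕ → ℝ) : ℕ → ℕ → ℝ := fun i j => (g i (j + 1) - g i j) / hy

/-- `[D_x w]_{i,j} = (w_{i+1/2,j} - w_{i-1/2,j})/h_x` for an x-edge array `w`. -/
noncomputable def DX (hx : ℝ) (w : ℕ → ℕ → ℝ) : ℕ → ℕ → ℝ := fun i j => (w i j - w (i - 1) j) / hx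

/-- `[D_y w]_{i,j} = (w_{i,j+1/2} - w_{i,j-1/2})/h_y` for a y-edge array `w`. -/
noncomputable def DY (hy : ℝ) (w : ℕ → ℕ → ℝ) : ℕ → ℕ → ℝ := fun i j => (w i j - w i (j - 1)) / hy

/-- Five-point discrete Laplacian `[Δ_h g]_{i,j}` (meaningful at interior cells). -/
noncomputable def lapH (hx hy : ℝ) (g : ℕ → ℕ → ℝ) : ℕ → ℕ → ℝ := fun i j =>
  (g (i + 1) j - 2 * g i j + g (i - 1) j) / hx ^ 2 +
  (g i (j + 1) - 2 * g i j + g i (j - 1)) / hy ^ 2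

/-- The discrete homogeneous Neumann boundary condition for a grid function. -/
noncomputable def NeumannBC (Nx Ny : ℕ) (g : ℕ → ℕ → ℝ) : Prop :=
  (∀ j ∈ Finset.Icc 1 Ny, g 0 j = g 1 j ∧ g (Nx + 1) j = g Nx j) ∧
  (∀ i ∈ Finset.Icc 1 Nx, g i 0 = g i 1 ∧ g i (Ny + 1) = g i Ny)

/-- Extension of interior data to ghost cells via the discrete Neumann BC
(clamping of indices to the interior range). -/
noncomputable def extN (Nx Ny : ℕ) (u : ℕ → ℕ → ℝ) : ℕ → ℕ → ℝ := fun i j =>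
  u (min (max i 1) Nx) (min (max j 1) Ny)

/-- `‖∇_h g‖² = (d_x g, d_x g)_x + (d_y g, d_y g)_y`. -/
noncomputable def gradSq (Nx Ny : ℕ) (hx hy : ℝ) (g : ℕ → ℕ → ℝ) : ℝ :=
  innerX Nx Ny hx hy (dX hx g) (dX hx g) + innerY Nx Ny hx hy (dY hy g) (dY hy g)

/-- `Δ_h² g`, where `Δ_h g` is extended to ghost cells via its own Neumann BC. -/
noncomputable def lap2H (Nx Ny : ℕ) (hx hy : ℝ) (g : ℕ → ℕ → ℝ) : ℕ → ℕ → ℝ :=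
  lapH hx hy (extN Nx Ny (lapH hx hy g))

/-- `Δ_h³ g`, where `Δ_h g`, `Δ_h² g` are extended to ghost cells via their own Neumann BC. -/
noncomputable def lap3H (Nx Ny : ℕ) (hx hy : ℝ) (g : ℕ → ℕ → ℝ) : ℕ → ℕ → ℝ :=
  lapH hx hy (extN Nx Ny (lap2H Nx Ny hx hy g))

/-- Discrete energy `E_1^h(g) = Σ h_x h_y F(g_{ij})` with `F(s) = s⁴/4`. -/
noncomputable def E1h (Nx Ny : ℕ) (hx hy : ℝ) (g : ℕ → ℕ → ℝ) : ℝ :=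
  ∑ i ∈ Finset.Icc 1 Nx, ∑ j ∈ Finset.Icc 1 Ny, hx * hy * (g i j ^ 4 / 4)

/-- Positive definiteness of the discrete `H⁻¹` form: if `η` satisfies the discrete
Neumann BC with `-Δ_h η = φ` at all interior cells, then
`(φ,φ)_{-1} = ‖∇_h η‖² ≥ 0`, and `‖∇_h η‖² = 0` forces `φ = 0` at all interior cells. -/
theorem discrete_Hminus1_pos_def
    (Nx Ny : ℕ) (hNx : 1 ≤ Nx) (hNy : 1 ≤ Ny)
    (hx hy : ℝ) (hhx : 0 < hx) (hhy : 0 < hy)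
    (φ η : ℕ → ℕ → ℝ)
    (hη : NeumannBC Nx Ny η)
    (hφ : ∀ i ∈ Finset.Icc 1 Nx, ∀ j ∈ Finset.Icc 1 Ny, -lapH hx hy η i j = φ i j) :
    0 ≤ gradSq Nx Ny hx hy η ∧
    (gradSq Nx Ny hx hy η = 0 →
      ∀ i ∈ Finset.Icc 1 Nx, ∀ j ∈ Finset.Icc 1 Ny, φ i j = 0) := by
  have key : ∀ (N M : ℕ) (u : ℕ → ℕ → ℝ),
      (∑ i ∈ Finset.Icc 1 N, ∑ j ∈ Finset.Icc 1 M, hx * hy * u i j * u i j) = 0 →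
      ∀ i ∈ Finset.Icc 1 N, ∀ j ∈ Finset.Icc 1 M, u i j = 0 := by
    intro N M u h0 i hi j hj
    have hnn : ∀ i ∈ Finset.Icc 1 N, ∀ j ∈ Finset.Icc 1 M, 0 ≤ hx * hy * u i j * u i j := by
      intro i _ j _; nlinarith [mul_pos hhx hhy, mul_self_nonneg (u i j)]
    have h1 := (Finset.sum_eq_zero_iff_of_nonneg
      (fun i hi => Finset.sum_nonneg (fun j hj => hnn i hi j hj))).mp h0 i hi
    have h2 := (Finset.sum_eq_zero_iff_of_nonneg (fun j hj => hnn i hi j hj)).mp h1 j hj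
    have hp := mul_pos hhx hhy
    have h3 : u i j * u i j = 0 := by
      by_contra hne
      have hlt : 0 < u i j * u i j := lt_of_le_of_ne (mul_self_nonneg _) (Ne.symm hne)
      nlinarith
    exact mul_self_eq_zero.mp h3
  have nnX : 0 ≤ innerX Nx Ny hx hy (dX hx η) (dX hx η) := by
    apply Finset.sum_nonneg; intro i _; apply Finset.sum_nonneg; intro j _
    nlinarith [mul_pos hhx hhy, mul_self_nonneg (dX hx η i j)]
  have nnY : 0 ≤ innerY Nx Ny hx hy (dY hy η) (dY hy η) := by
    apply Finset.sum_nonneg; intro i _; apply Finset.sum_nonneg; intro j _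
    nlinarith [mul_pos hhx hhy, mul_self_nonneg (dY hy η i j)]
  refine ⟨add_nonneg nnX nnY, ?_⟩
  intro h0 i hi j hj
  have h0' : innerX Nx Ny hx hy (dX hx η) (dX hx η)
      + innerY Nx Ny hx hy (dY hy η) (dY hy η) = 0 := h0
  have hX0 : innerX Nx Ny hx hy (dX hx η) (dX hx η) = 0 := by linarith
  have hY0 : innerY Nx Ny hx hy (dY hy η) (dY hy η) = 0 := by linarith
  have hdx := key (Nx - 1) Ny (dX hx η) hX0
  have hdy := key Nx (Ny - 1) (dY hy η) hY0
  simp only [Finset.mem_Icc] at hi hj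
  -- neighbor equalities
  have hXp : ∀ k, 1 ≤ k → k ≤ Nx → η (k + 1) j = η k j := by
    intro k hk1 hk2
    rcases eq_or_lt_of_le hk2 with h | h
    · subst h; exact (hη.1 j (by simp [Finset.mem_Icc]; omega)).2
    · have := hdx k (by simp [Finset.mem_Icc]; omega) j (by simp [Finset.mem_Icc]; omega)
      unfold dX at this
      have hxne : hx ≠ 0 := ne_of_gt hhx
      field_simp at this
      linarith
  have hYp : ∀ k, 1 ≤ k → k ≤ Ny → η i (k + 1) = η i k := by
    intro k hk1 hk2
    rcases eq_or_lt_of_le hk2 with h | h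
    · subst h; exact (hη.2 i (by simp [Finset.mem_Icc]; omega)).2
    · have := hdy i (by simp [Finset.mem_Icc]; omega) k (by simp [Finset.mem_Icc]; omega)
      unfold dY at this
      have hyne : hy ≠ 0 := ne_of_gt hhy
      field_simp at this
      linarith
  have e1 : η (i + 1) j = η i j := hXp i hi.1 hi.2
  have e2 : η (i - 1) j = η i j := by
    rcases Nat.eq_or_lt_of_le hi.1 with h | h
    · have hi1 : i = 1 := h.symm
      subst hi1
      norm_num
      exact (hη.1 j (by simp [Finset.mem_Icc]; omega)).1
    · have hk := hXp (i - 1) (by omega) (by omega)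
      have : i - 1 + 1 = i := by omega
      rw [this] at hk
      linarith
  have e3 : η i (j + 1) = η i j := hYp j hj.1 hj.2
  have e4 : η i (j - 1) = η i j := by
    rcases Nat.eq_or_lt_of_le hj.1 with h | h
    · have hj1 : j = 1 := h.symm
      subst hj1
      norm_num
      exact (hη.2 i (by simp [Finset.mem_Icc]; omega)).1
    · have hk := hYp (j - 1) (by omega) (by omega)
      have : j - 1 + 1 = j := by omega
      rw [this] at hk
      linarith
  have := hφ i (by simp [Finset.mem_Icc]; omega) j (by simp [Finset.mem_Icc]; omega)
  rw [← this]
  unfold lapH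
  rw [e1, e2, e3, e4]
  ring
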